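/- For the PPR LocalSOR/LocalGD stopping condition: if r = αe_s − (I − (1−α)AD^{-1})x with ||D^{-1}r||_∞ ≤ αε on an undirected graph without isolated vertices, then the estimate x satisfies ||D^{-1}(x − f_PPR)||_∞ ≤ ε, where f_PPR = α(I − (1−α)AD^{-1})^{-1} e_s. -/
import Mathlib


open Matrix

/-- Estimation quality of the PPR local solvers: if
`r = α e_s - (I - (1-α) A D⁻¹) x` with `r ≥ 0` and `‖D⁻¹ r‖_∞ ≤ αε`, then
`‖D⁻¹ (x - f_PPR)‖_∞ ≤ ε`, where `f_PPR = α (I - (1-α) A D⁻¹)⁻¹ e_s`. -/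
theorem ppr_estimate_quality (n : ℕ) (G : SimpleGraph (Fin n)) [DecidableRel G.Adj]
    (hdeg : ∀ v, 0 < G.degree v) (α ε : ℝ) (hα : 0 < α) (hα1 : α < 1) (hε : 0 < ε)
    (s : Fin n)
    (e : Fin n → Fin n → ℝ) (he : ∀ i, e i = Pi.single i 1)
    (Q : Matrix (Fin n) (Fin n) ℝ)
    (hQ : Q = 1 - (1 - α) •
      (G.adjMatrix ℝ * (Matrix.diagonal fun v => (G.degree v : ℝ))⁻¹))
    (hQu : IsUnit Q)
    (fppr : Fin n → ℝ) (hf : fppr = α • (Q⁻¹ *ᵥ e s))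
    (x r : Fin n → ℝ) (hr : r = α • e s - Q *ᵥ x)
    (hrpos : ∀ u, 0 ≤ r u)
    (hstop : ∀ u, |r u| / (G.degree u : ℝ) ≤ α * ε) :
    ∀ u, |x u - fppr u| / (G.degree u : ℝ) ≤ ε := by
  have hdpos : ∀ v, (0 : ℝ) < (G.degree v : ℝ) := fun v => by
    exact_mod_cast hdeg v
  -- key equation: Q *ᵥ (x - fppr) = -r
  have hkey : Q *ᵥ (x - fppr) = -r := by
    have h1 : Q *ᵥ fppr = α • e s := by
      rw [hf, mulVec_smul, mulVec_mulVec, Matrix.mul_nonsing_inv _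
        ((Matrix.isUnit_iff_isUnit_det Q).mp hQu), one_mulVec]
    rw [Matrix.mulVec_sub, h1, hr]
    abel
  -- pointwise form of the key equation
  set z : Fin n → ℝ := fun u => |x u - fppr u| / (G.degree u : ℝ) with hz
  have hdiag : (Matrix.diagonal fun v => (G.degree v : ℝ))⁻¹ =
      Matrix.diagonal fun v => ((G.degree v : ℝ))⁻¹ := by
    apply Matrix.inv_eq_right_inv
    rw [Matrix.diagonal_mul_diagonal]
    convert Matrix.diagonal_one
    exact mul_inv_cancel₀ (ne_of_gt (hdpos _))
  have hpt : ∀ u, x u - fppr u =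
      (1 - α) * (∑ w ∈ G.neighborFinset u, (x w - fppr w) / (G.degree w : ℝ)) - r u := by
    intro u
    have := congrFun hkey u
    rw [hQ, Matrix.sub_mulVec, one_mulVec, smul_mulVec,
      ← mulVec_mulVec, hdiag] at this
    have hmv : ((Matrix.diagonal fun v => ((G.degree v : ℝ))⁻¹) *ᵥ (x - fppr)) =
        fun w => (x w - fppr w) / (G.degree w : ℝ) := by
      funext w
      simp [Matrix.mulVec_diagonal, div_eq_inv_mul]
    rw [hmv] at this
    simp only [Pi.sub_apply, Pi.smul_apply, Pi.neg_apply, smul_eq_mul,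
      SimpleGraph.adjMatrix_mulVec_apply] at this
    linarith
  intro u
  -- take a maximizer of z
  obtain ⟨u₀, _, hmax⟩ := Finset.exists_max_image Finset.univ z ⟨u, Finset.mem_univ u⟩
  have hmax' : ∀ w, z w ≤ z u₀ := fun w => hmax w (Finset.mem_univ w)
  have hzpos : ∀ w, 0 ≤ z w := fun w => div_nonneg (abs_nonneg _) (hdpos w).le
  have hu₀ : z u₀ ≤ ε := by
    have h1 : |x u₀ - fppr u₀| ≤ (1 - α) * ((G.degree u₀ : ℝ) * z u₀) + |r u₀| := by
      rw [hpt u₀]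
      calc |(1 - α) * (∑ w ∈ G.neighborFinset u₀, (x w - fppr w) / (G.degree w : ℝ)) - r u₀|
          ≤ |(1 - α) * (∑ w ∈ G.neighborFinset u₀, (x w - fppr w) / (G.degree w : ℝ))| + |r u₀| :=
            abs_sub _ _
        _ ≤ (1 - α) * ((G.degree u₀ : ℝ) * z u₀) + |r u₀| := by
            have hsum : |∑ w ∈ G.neighborFinset u₀, (x w - fppr w) / (G.degree w : ℝ)|
                ≤ (G.degree u₀ : ℝ) * z u₀ := by
              calc |∑ w ∈ G.neighborFinset u₀, (x w - fppr w) / (G.degree w : ℝ)|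
                ≤ ∑ w ∈ G.neighborFinset u₀, |(x w - fppr w) / (G.degree w : ℝ)| :=
                  Finset.abs_sum_le_sum_abs _ _
              _ ≤ ∑ w ∈ G.neighborFinset u₀, z u₀ := by
                  apply Finset.sum_le_sum
                  intro w _
                  rw [abs_div, abs_of_nonneg (hdpos w).le]
                  exact hmax' w
              _ = (G.degree u₀ : ℝ) * z u₀ := by
                  rw [Finset.sum_const, SimpleGraph.card_neighborFinset_eq_degree,
                    nsmul_eq_mul]
            have := mul_le_mul_of_nonneg_left hsum (by linarith : (0:ℝ) ≤ 1 - α)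
            rw [abs_mul, abs_of_nonneg (by linarith : (0:ℝ) ≤ 1 - α)]
            linarith
    have h2 : |r u₀| ≤ α * ε * (G.degree u₀ : ℝ) := by
      have := hstop u₀
      rw [div_le_iff₀ (hdpos u₀)] at this
      linarith
    have h3 : z u₀ * (G.degree u₀ : ℝ) = |x u₀ - fppr u₀| := by
      simp only [hz]
      exact div_mul_cancel₀ _ (ne_of_gt (hdpos u₀))
    have h4 : α * (z u₀ * (G.degree u₀ : ℝ)) ≤ α * (ε * (G.degree u₀ : ℝ)) := by
      nlinarith
    have h5 : z u₀ * (G.degree u₀ : ℝ) ≤ ε * (G.degree u₀ : ℝ) :=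
      le_of_mul_le_mul_left h4 hα
    exact le_of_mul_le_mul_right h5 (hdpos u₀)
  exact le_trans (hmax' u) hu₀
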